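/- Under the standing assumptions, fix ε_h ∈ (0,1/2] and set L₀ := 2a + 4K_H + (l+1)(2K_h + a). For 0 < λ ≤ min{1, 1/(6L₀)^{1/(1−ε_h)}}, the map f : ℝ^d → ℝ^d given by f(θ) = θ − λ h_λ(θ) is bi-Lipschitz: for all θ, θ' ∈ ℝ^d, (1 − L₀ λ^{1−ε_h})|θ − θ'| ≤ |f(θ) − f(θ')| ≤ (1 + L₀ λ^{1−ε_h})|θ − θ'|; moreover f is a bijection from ℝ^d onto ℝ^d. -/

import Mathlib

open Real

lemma kt_lam_le_rpow {lam eps : ℝ} (h0 : 0 < lam) (h1 : lam ≤ 1)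
    (he0 : 0 < eps) (he1 : eps ≤ 1) : lam ≤ lam ^ ((1:ℝ) - eps) := by
  calc lam = lam ^ (1:ℝ) := (Real.rpow_one lam).symm
    _ ≤ lam ^ ((1:ℝ) - eps) := Real.rpow_le_rpow_of_exponent_ge h0 h1 (by linarith)

lemma kt_base_one_le {lam s r : ℝ} (h0 : 0 < lam) (hs : 0 ≤ s) :
    (1:ℝ) ≤ 1 + lam * s ^ r := by
  have := Real.rpow_nonneg hs r
  nlinarith

lemma kt_inv_le_one {lam s r eps : ℝ} (h0 : 0 < lam) (hs : 0 ≤ s) (he : 0 ≤ eps) :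
    ((1 + lam * s ^ r) ^ eps)⁻¹ ≤ 1 := by
  have hb := kt_base_one_le (r := r) h0 hs
  have h1 : (1:ℝ) ≤ (1 + lam * s ^ r) ^ eps := by
    calc (1:ℝ) = (1:ℝ) ^ eps := (Real.one_rpow eps).symm
      _ ≤ (1 + lam * s ^ r) ^ eps := Real.rpow_le_rpow zero_le_one hb he
  rw [inv_le_one_iff₀]
  right; exact h1

lemma kt_keyA {lam eps : ℝ} {l : ℕ} (hl : 1 ≤ l) (h0 : 0 < lam) (h1 : lam ≤ 1)
    (he0 : 0 < eps) (he1 : eps ≤ 1/2) {s : ℝ} (hs : 0 ≤ s) :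
    lam * ((1 + lam * s ^ (((l:ℝ)+1)/eps)) ^ eps)⁻¹ * s ^ l ≤ lam ^ ((1:ℝ)-eps) := by
  set r : ℝ := ((l:ℝ)+1)/eps with hrdef
  have hinv1 : ((1 + lam * s ^ r) ^ eps)⁻¹ ≤ 1 := kt_inv_le_one h0 hs he0.le
  have hinv0 : (0:ℝ) ≤ ((1 + lam * s ^ r) ^ eps)⁻¹ := by
    have hb := kt_base_one_le (r := r) h0 hs
    positivity
  rcases le_or_gt s 1 with hs1 | hs1
  · have hsl : s ^ l ≤ 1 := pow_le_one₀ hs hs1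
    calc lam * ((1 + lam * s ^ r) ^ eps)⁻¹ * s ^ l ≤ lam * 1 * 1 := by
          apply mul_le_mul (mul_le_mul le_rfl hinv1 hinv0 h0.le) hsl (pow_nonneg hs l) (by linarith)
      _ = lam := by ring
      _ ≤ lam ^ ((1:ℝ)-eps) := kt_lam_le_rpow h0 h1 he0 (by linarith)
  · have hspos : (0:ℝ) < s := lt_trans one_pos hs1
    have hre : r * eps = (l:ℝ) + 1 := by
      rw [hrdef]; field_simp
    have hkey : lam ^ eps * s ^ (l+1) ≤ (1 + lam * s ^ r) ^ eps := by
      have h2 : (lam * s ^ r) ^ eps ≤ (1 + lam * s ^ r) ^ eps := by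
        apply Real.rpow_le_rpow (by positivity) (by linarith) he0.le
      have h3 : (lam * s ^ r) ^ eps = lam ^ eps * s ^ (l+1) := by
        rw [Real.mul_rpow h0.le (Real.rpow_nonneg hspos.le r), ← Real.rpow_natCast s (l+1),
          ← Real.rpow_mul hspos.le]
        push_cast [hre]
        ring_nf
      linarith [h3 ▸ h2]
    have hpos2 : (0:ℝ) < lam ^ eps * s ^ (l+1) := by positivity
    have hinv2 : ((1 + lam * s ^ r) ^ eps)⁻¹ ≤ (lam ^ eps * s ^ (l+1))⁻¹ :=
      inv_anti₀ hpos2 hkey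
    calc lam * ((1 + lam * s ^ r) ^ eps)⁻¹ * s ^ l
        ≤ lam * (lam ^ eps * s ^ (l+1))⁻¹ * s ^ l := by
          apply mul_le_mul (mul_le_mul le_rfl hinv2 hinv0 h0.le) le_rfl (pow_nonneg hspos.le l)
          positivity
      _ = (lam / lam ^ eps) * (s ^ l / s ^ (l+1)) := by
          rw [mul_inv]; ring
      _ = lam ^ ((1:ℝ) - eps) * s⁻¹ := by
          rw [show lam / lam ^ eps = lam ^ ((1:ℝ) - eps) by
              rw [Real.rpow_sub h0, Real.rpow_one],
            show s ^ l / s ^ (l+1) = s⁻¹ by rw [pow_succ]; field_simp]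
      _ ≤ lam ^ ((1:ℝ) - eps) * 1 := by
          apply mul_le_mul le_rfl (inv_le_one_of_one_le₀ hs1.le) (by positivity) (by positivity)
      _ = lam ^ ((1:ℝ) - eps) := mul_one _

lemma kt_keyB {lam eps a K_h : ℝ} {l : ℕ} (hl : 1 ≤ l) (h0 : 0 < lam) (h1 : lam ≤ 1)
    (he0 : 0 < eps) (he1 : eps ≤ 1/2) (ha : 0 < a) (hK : 0 < K_h) {s : ℝ} (hs : 0 < s) :
    lam * (((l:ℝ)+1) * lam * s ^ ((((l:ℝ)+1)/eps) - 1) *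
        ((1 + lam * s ^ (((l:ℝ)+1)/eps)) ^ (eps+1))⁻¹) * (K_h * (1 + s ^ (l+1)) + a * s)
      ≤ lam ^ ((1:ℝ)-eps) * (((l:ℝ)+1) * (2*K_h + a)) := by
  set r : ℝ := ((l:ℝ)+1)/eps with hrdef
  have hl2 : (2:ℝ) ≤ (l:ℝ) + 1 := by
    have : (1:ℝ) ≤ (l:ℝ) := by exact_mod_cast hl
    linarith
  have hre : r * eps = (l:ℝ) + 1 := by rw [hrdef]; field_simp
  have hr1 : (1:ℝ) ≤ r := by
    rw [hrdef, le_div_iff₀ he0]; linarith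
  have hb := kt_base_one_le (r := r) (s := s) h0 hs.le
  have hbpos : (0:ℝ) < 1 + lam * s ^ r := lt_of_lt_of_le one_pos hb
  set X : ℝ := ((1 + lam * s ^ r) ^ (eps+1))⁻¹ with hXdef
  have hXpos : (0:ℝ) < X := by rw [hXdef]; positivity
  have hX1 : X ≤ 1 := by
    rw [hXdef, inv_le_one_iff₀]
    right
    calc (1:ℝ) = (1:ℝ) ^ (eps+1) := (Real.one_rpow _).symm
      _ ≤ (1 + lam * s ^ r) ^ (eps+1) := Real.rpow_le_rpow zero_le_one hb (by linarith)
  have hlam2 : lam * lam ≤ lam ^ ((1:ℝ)-eps) := by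
    have : lam * lam ≤ lam := by nlinarith
    exact le_trans this (kt_lam_le_rpow h0 h1 he0 (by linarith))
  have C3 : lam * lam * s ^ (r-1) * X * s ≤ lam ^ ((1:ℝ)-eps) := by
    have hsr : s ^ (r-1) * s = s ^ r := by
      rw [← Real.rpow_add_one hs.ne' (r-1)]
      congr 1; ring
    have hfrac : lam * s ^ r * X ≤ 1 := by
      have h4 : 1 + lam * s ^ r ≤ (1 + lam * s ^ r) ^ (eps+1) := by
        calc 1 + lam * s ^ r = (1 + lam * s ^ r) ^ (1:ℝ) := (Real.rpow_one _).symm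
          _ ≤ (1 + lam * s ^ r) ^ (eps+1) := Real.rpow_le_rpow_of_exponent_le hb (by linarith)
      have h5 : lam * s ^ r ≤ (1 + lam * s ^ r) ^ (eps+1) := by linarith
      rw [hXdef, ← div_eq_mul_inv, div_le_one (by positivity)]
      exact h5
    calc lam * lam * s ^ (r-1) * X * s = lam * (lam * s ^ r * X) := by
          rw [← hsr]; ring
      _ ≤ lam * 1 := by
          apply mul_le_mul le_rfl hfrac (by positivity) h0.le
      _ = lam := mul_one _
      _ ≤ lam ^ ((1:ℝ)-eps) := kt_lam_le_rpow h0 h1 he0 (by linarith)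
  have Cgen : ∀ t : ℝ, 1 ≤ s → t ≤ r + (l:ℝ) → lam * lam * s ^ t * X ≤ lam ^ ((1:ℝ)-eps) := by
    intro t hs1 ht
    have hst : s ^ t ≤ s ^ (r + (l:ℝ)) := Real.rpow_le_rpow_of_exponent_le hs1 ht
    have hBig : lam ^ (eps+1) * s ^ (r + (l:ℝ) + 1) ≤ (1 + lam * s ^ r) ^ (eps+1) := by
      have h2 : (lam * s ^ r) ^ (eps+1) ≤ (1 + lam * s ^ r) ^ (eps+1) :=
        Real.rpow_le_rpow (by positivity) (by linarith) (by linarith)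
      have h3 : (lam * s ^ r) ^ (eps+1) = lam ^ (eps+1) * s ^ (r + (l:ℝ) + 1) := by
        rw [Real.mul_rpow h0.le (Real.rpow_nonneg hs.le r), ← Real.rpow_mul hs.le]
        congr 1
        have : r * (eps + 1) = r * eps + r := by ring
        rw [this, hre]; ring
      linarith [h3 ▸ h2]
    have hXle : X ≤ (lam ^ (eps+1) * s ^ (r + (l:ℝ) + 1))⁻¹ := by
      rw [hXdef]
      exact inv_anti₀ (by positivity) hBig
    calc lam * lam * s ^ t * X
        ≤ lam * lam * s ^ (r + (l:ℝ)) * (lam ^ (eps+1) * s ^ (r + (l:ℝ) + 1))⁻¹ := by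
          apply mul_le_mul (mul_le_mul (le_refl (lam*lam)) hst (Real.rpow_nonneg hs.le t)
            (by positivity)) hXle hXpos.le (by positivity)
      _ = (lam * lam / lam ^ (eps+1)) * (s ^ (r + (l:ℝ)) / s ^ (r + (l:ℝ) + 1)) := by
          rw [mul_inv]; ring
      _ = lam ^ ((1:ℝ)-eps) * s ^ (-1:ℝ) := by
          congr 1
          · rw [show lam * lam = lam ^ (2:ℝ) by
                rw [show (2:ℝ) = ((2:ℕ):ℝ) by norm_num, Real.rpow_natCast]; ring,
              ← Real.rpow_sub h0]
            congr 1; ring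
          · rw [← Real.rpow_sub hs]; norm_num
      _ ≤ lam ^ ((1:ℝ)-eps) * 1 := by
          apply mul_le_mul le_rfl (Real.rpow_le_one_of_one_le_of_nonpos hs1 (by norm_num))
            (by positivity) (by positivity)
      _ = lam ^ ((1:ℝ)-eps) := mul_one _
  have C1 : lam * lam * s ^ (r-1) * X ≤ lam ^ ((1:ℝ)-eps) := by
    rcases le_or_gt s 1 with hs1 | hs1
    · have h4 : s ^ (r-1) ≤ 1 := Real.rpow_le_one hs.le hs1 (by linarith)
      calc lam * lam * s ^ (r-1) * X ≤ lam * lam * 1 * 1 := by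
            apply mul_le_mul (mul_le_mul le_rfl h4 (Real.rpow_nonneg hs.le _) (by positivity))
              hX1 hXpos.le (by positivity)
        _ = lam * lam := by ring
        _ ≤ lam ^ ((1:ℝ)-eps) := hlam2
    · exact Cgen (r-1) hs1.le (by
        have h9 : (1:ℝ) ≤ (l:ℝ) := by exact_mod_cast hl
        linarith)
  have C2 : lam * lam * s ^ (r-1) * X * s ^ (l+1) ≤ lam ^ ((1:ℝ)-eps) := by
    rcases le_or_gt s 1 with hs1 | hs1
    · have h4 : s ^ (r-1) ≤ 1 := Real.rpow_le_one hs.le hs1 (by linarith)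
      have h5 : s ^ (l+1) ≤ 1 := pow_le_one₀ hs.le hs1
      calc lam * lam * s ^ (r-1) * X * s ^ (l+1) ≤ lam * lam * 1 * 1 * 1 := by
            apply mul_le_mul _ h5 (by positivity) (by positivity)
            apply mul_le_mul (mul_le_mul le_rfl h4 (Real.rpow_nonneg hs.le _) (by positivity))
              hX1 hXpos.le (by positivity)
        _ = lam * lam := by ring
        _ ≤ lam ^ ((1:ℝ)-eps) := hlam2
    · have heq : s ^ (r-1) * s ^ (l+1) = s ^ (r + (l:ℝ)) := by
        rw [← Real.rpow_natCast s (l+1), ← Real.rpow_add hs]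
        push_cast; ring_nf
      calc lam * lam * s ^ (r-1) * X * s ^ (l+1)
          = lam * lam * s ^ (r + (l:ℝ)) * X := by rw [← heq]; ring
        _ ≤ lam ^ ((1:ℝ)-eps) := Cgen (r + (l:ℝ)) hs1.le le_rfl
  have expand : lam * (((l:ℝ)+1) * lam * s ^ (r - 1) * X) * (K_h * (1 + s ^ (l+1)) + a * s)
      = ((l:ℝ)+1) * (K_h * (lam * lam * s ^ (r-1) * X)
        + K_h * (lam * lam * s ^ (r-1) * X * s ^ (l+1))
        + a * (lam * lam * s ^ (r-1) * X * s)) := by ring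
  rw [expand]
  have hfinal : K_h * (lam * lam * s ^ (r-1) * X)
        + K_h * (lam * lam * s ^ (r-1) * X * s ^ (l+1))
        + a * (lam * lam * s ^ (r-1) * X * s)
      ≤ K_h * lam ^ ((1:ℝ)-eps) + K_h * lam ^ ((1:ℝ)-eps) + a * lam ^ ((1:ℝ)-eps) := by
    gcongr
  calc ((l:ℝ)+1) * (K_h * (lam * lam * s ^ (r-1) * X)
        + K_h * (lam * lam * s ^ (r-1) * X * s ^ (l+1))
        + a * (lam * lam * s ^ (r-1) * X * s))
      ≤ ((l:ℝ)+1) * (K_h * lam ^ ((1:ℝ)-eps) + K_h * lam ^ ((1:ℝ)-eps)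
          + a * lam ^ ((1:ℝ)-eps)) := by
        apply mul_le_mul le_rfl hfinal (by positivity) (by positivity)
    _ = lam ^ ((1:ℝ)-eps) * (((l:ℝ)+1) * (2*K_h + a)) := by ring

lemma kt_psi_hasDeriv {lam eps r : ℝ} (h0 : 0 < lam) (hr1 : 1 ≤ r) {s : ℝ} (hs : 0 ≤ s) :
    HasDerivAt (fun t : ℝ => ((1 + lam * t ^ r) ^ eps)⁻¹)
      (-(eps * (1 + lam * s ^ r) ^ (eps - 1) * (lam * (r * s ^ (r - 1)))) /
        ((1 + lam * s ^ r) ^ eps) ^ 2) s := by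
  have hb : (0:ℝ) < 1 + lam * s ^ r := lt_of_lt_of_le one_pos (kt_base_one_le h0 hs)
  have h1 : HasDerivAt (fun t : ℝ => t ^ r) (r * s ^ (r-1)) s :=
    Real.hasDerivAt_rpow_const (Or.inr hr1)
  have h2 : HasDerivAt (fun t : ℝ => 1 + lam * t ^ r) (lam * (r * s ^ (r-1))) s :=
    (h1.const_mul lam).const_add 1
  have h3 := h2.rpow_const (p := eps) (Or.inl hb.ne')
  have h4 : HasDerivAt (fun t : ℝ => ((1 + lam * t ^ r) ^ eps)⁻¹) _ s := h3.inv (by positivity)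
  convert h4 using 1
  ring

lemma kt_keyC {lam eps a K_h : ℝ} {l : ℕ} (hl : 1 ≤ l) (h0 : 0 < lam) (h1 : lam ≤ 1)
    (he0 : 0 < eps) (he1 : eps ≤ 1/2) (ha : 0 < a) (hK : 0 < K_h)
    {m M : ℝ} (hm : 0 ≤ m) (hmM : m ≤ M) :
    lam * |((1 + lam * M ^ (((l:ℝ)+1)/eps)) ^ eps)⁻¹ -
        ((1 + lam * m ^ (((l:ℝ)+1)/eps)) ^ eps)⁻¹| * (K_h * (1 + m ^ (l+1)) + a * m)
      ≤ lam ^ ((1:ℝ)-eps) * (((l:ℝ)+1) * (2*K_h + a)) * (M - m) := by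
  set r : ℝ := ((l:ℝ)+1)/eps with hrdef
  have hl2 : (2:ℝ) ≤ (l:ℝ) + 1 := by
    have : (1:ℝ) ≤ (l:ℝ) := by exact_mod_cast hl
    linarith
  have hre : eps * r = (l:ℝ) + 1 := by rw [hrdef]; field_simp
  have hr1 : (1:ℝ) ≤ r := by
    rw [hrdef, le_div_iff₀ he0]; linarith
  rcases eq_or_lt_of_le hmM with heq | hlt
  · subst heq; simp
  · set ψ : ℝ → ℝ := fun t : ℝ => ((1 + lam * t ^ r) ^ eps)⁻¹ with hψ
    set ψ' : ℝ → ℝ := fun t : ℝ =>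
      -(eps * (1 + lam * t ^ r) ^ (eps - 1) * (lam * (r * t ^ (r - 1)))) /
        ((1 + lam * t ^ r) ^ eps) ^ 2 with hψ'
    have hderiv : ∀ x ∈ Set.Icc m M, HasDerivAt ψ (ψ' x) x := fun x hx =>
      kt_psi_hasDeriv h0 hr1 (le_trans hm hx.1)
    obtain ⟨ξ, hξ, hslope⟩ := exists_hasDerivAt_eq_slope ψ ψ' hlt
      (fun x hx => (hderiv x hx).continuousAt.continuousWithinAt)
      (fun x hx => hderiv x (Set.mem_Icc_of_Ioo hx))
    have hξ0 : 0 < ξ := lt_of_le_of_lt hm hξ.1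
    have hdiff : ψ M - ψ m = ψ' ξ * (M - m) := by
      rw [hslope, div_mul_cancel₀ _ (sub_ne_zero.mpr hlt.ne')]
    have hbξ : (0:ℝ) < 1 + lam * ξ ^ r := lt_of_lt_of_le one_pos (kt_base_one_le h0 hξ0.le)
    have habs : |ψ' ξ| = eps * (1 + lam * ξ ^ r) ^ (eps - 1) * (lam * (r * ξ ^ (r - 1))) /
        ((1 + lam * ξ ^ r) ^ eps) ^ 2 := by
      rw [hψ']
      rw [abs_div, abs_neg, abs_of_nonneg (by positivity), abs_of_nonneg (by positivity)]
    have hsimp : (1 + lam * ξ ^ r) ^ (eps - 1) / ((1 + lam * ξ ^ r) ^ eps) ^ 2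
        = ((1 + lam * ξ ^ r) ^ (eps + 1))⁻¹ := by
      rw [sq, ← Real.rpow_add hbξ, ← Real.rpow_sub hbξ, ← Real.rpow_neg hbξ.le]
      congr 1; ring
    have habs2 : |ψ' ξ| = ((l:ℝ)+1) * lam * ξ ^ (r - 1) *
        ((1 + lam * ξ ^ r) ^ (eps + 1))⁻¹ := by
      rw [habs, show eps * (1 + lam * ξ ^ r) ^ (eps - 1) * (lam * (r * ξ ^ (r - 1))) /
            ((1 + lam * ξ ^ r) ^ eps) ^ 2
          = (eps * r) * lam * ξ ^ (r - 1) *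
            ((1 + lam * ξ ^ r) ^ (eps - 1) / ((1 + lam * ξ ^ r) ^ eps) ^ 2) by ring,
        hsimp, hre]
    have hgm : K_h * (1 + m ^ (l+1)) + a * m ≤ K_h * (1 + ξ ^ (l+1)) + a * ξ := by
      have h4 : m ^ (l+1) ≤ ξ ^ (l+1) := pow_le_pow_left₀ hm hξ.1.le _
      nlinarith [hξ.1.le]
    have hgm0 : (0:ℝ) ≤ K_h * (1 + m ^ (l+1)) + a * m := by positivity
    have hB := kt_keyB (a := a) (K_h := K_h) hl h0 h1 he0 he1 ha hK hξ0
    calc lam * |ψ M - ψ m| * (K_h * (1 + m ^ (l+1)) + a * m)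
        = lam * |ψ' ξ| * (K_h * (1 + m ^ (l+1)) + a * m) * (M - m) := by
          rw [hdiff, abs_mul, abs_of_nonneg (by linarith : (0:ℝ) ≤ M - m)]; ring
      _ ≤ lam * |ψ' ξ| * (K_h * (1 + ξ ^ (l+1)) + a * ξ) * (M - m) := by
          have h5 : (0:ℝ) ≤ lam * |ψ' ξ| := by positivity
          apply mul_le_mul _ le_rfl (by linarith) _
          · exact mul_le_mul le_rfl hgm hgm0 h5
          · positivity
      _ = lam * (((l:ℝ)+1) * lam * ξ ^ (r - 1) * ((1 + lam * ξ ^ r) ^ (eps + 1))⁻¹) *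
            (K_h * (1 + ξ ^ (l+1)) + a * ξ) * (M - m) := by rw [habs2]
      _ ≤ lam ^ ((1:ℝ)-eps) * (((l:ℝ)+1) * (2*K_h + a)) * (M - m) := by
          apply mul_le_mul hB le_rfl (by linarith) (by positivity)

set_option maxHeartbeats 1000000 in
theorem kTULA_drift_map_biLipschitz_bijective
    {d : ℕ} (hd : 0 < d)
    (u : EuclideanSpace ℝ (Fin d) → ℝ) (hu : ContDiff ℝ 3 u)
    (h : EuclideanSpace ℝ (Fin d) → EuclideanSpace ℝ (Fin d))
    (H : EuclideanSpace ℝ (Fin d) →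
      EuclideanSpace ℝ (Fin d) →L[ℝ] EuclideanSpace ℝ (Fin d))
    (hgrad : ∀ θ, h θ = gradient u θ)
    (hHess : ∀ θ, H θ = fderiv ℝ (gradient u) θ)
    (L K_H K_h a b : ℝ)
    (hL : 0 < L) (hK_H : 0 < K_H) (hK_h : 0 < K_h) (ha : 0 < a) (hb : 0 < b)
    (l : ℕ) (hl : 1 ≤ l)
    (hH_lip : ∀ θ θ' : EuclideanSpace ℝ (Fin d),
      ‖H θ - H θ'‖ ≤ L * (1 + ‖θ‖ + ‖θ'‖) ^ (l - 1) * ‖θ - θ'‖)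
    (hH_bd : ∀ θ : EuclideanSpace ℝ (Fin d), ‖H θ‖ ≤ K_H * (1 + ‖θ‖ ^ l))
    (hh_bd : ∀ θ : EuclideanSpace ℝ (Fin d), ‖h θ‖ ≤ K_h * (1 + ‖θ‖ ^ (l + 1)))
    (hdiss : ∀ θ : EuclideanSpace ℝ (Fin d), a * ‖θ‖ ^ 2 - b ≤ (inner ℝ (h θ) θ : ℝ))
    (hlam : ℝ → ℝ → EuclideanSpace ℝ (Fin d) → EuclideanSpace ℝ (Fin d))
    (hlam_def : ∀ (lam eps : ℝ) (θ : EuclideanSpace ℝ (Fin d)),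
      hlam lam eps θ =
        a • θ + ((1 + lam * ‖θ‖ ^ (((l : ℝ) + 1) / eps)) ^ eps)⁻¹ • (h θ - a • θ)) :
    ∀ (lam eps L₀ : ℝ),
      0 < eps → eps ≤ 1 / 2 →
      L₀ = 2 * a + 4 * K_H + ((l : ℝ) + 1) * (2 * K_h + a) →
      0 < lam → lam ≤ min 1 ((1 / (6 * L₀)) ^ ((1 : ℝ) / (1 - eps))) →
      (∀ θ θ' : EuclideanSpace ℝ (Fin d),
        (1 - L₀ * lam ^ ((1 : ℝ) - eps)) * ‖θ - θ'‖ ≤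
            ‖(θ - lam • hlam lam eps θ) - (θ' - lam • hlam lam eps θ')‖ ∧
          ‖(θ - lam • hlam lam eps θ) - (θ' - lam • hlam lam eps θ')‖ ≤
            (1 + L₀ * lam ^ ((1 : ℝ) - eps)) * ‖θ - θ'‖) ∧
      Function.Bijective (fun θ : EuclideanSpace ℝ (Fin d) => θ - lam • hlam lam eps θ) := by
  intro lam eps L₀ he0 he1 hL0 hlp hlmin
  have hlam1 : lam ≤ 1 := le_trans hlmin (min_le_left _ _)
  have hl1R : (1:ℝ) ≤ (l:ℝ) := by exact_mod_cast hl
  have hL0pos : 0 < L₀ := by rw [hL0]; positivity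
  set c : ℝ := L₀ * lam ^ ((1:ℝ) - eps) with hcdef
  have hrp0 : (0:ℝ) ≤ lam ^ ((1:ℝ) - eps) := Real.rpow_nonneg hlp.le _
  have hc0 : (0:ℝ) ≤ c := mul_nonneg hL0pos.le hrp0
  -- c ≤ 1/6
  have hc6 : c ≤ 1/6 := by
    have hle2 : lam ≤ (1 / (6 * L₀)) ^ ((1:ℝ) / (1 - eps)) :=
      le_trans hlmin (min_le_right _ _)
    have h2 : lam ^ ((1:ℝ) - eps) ≤ 1 / (6 * L₀) := by
      calc lam ^ ((1:ℝ) - eps)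
          ≤ ((1 / (6 * L₀)) ^ ((1:ℝ) / (1 - eps))) ^ ((1:ℝ) - eps) :=
            Real.rpow_le_rpow hlp.le hle2 (by linarith)
        _ = (1 / (6 * L₀)) ^ (((1:ℝ) / (1 - eps)) * ((1:ℝ) - eps)) :=
            (Real.rpow_mul (by positivity) _ _).symm
        _ = (1 / (6 * L₀)) ^ (1:ℝ) := by
            congr 1
            have hne : (1:ℝ) - eps ≠ 0 := by linarith
            field_simp
        _ = 1 / (6 * L₀) := Real.rpow_one _
    have h3 : c ≤ L₀ * (1 / (6 * L₀)) := by
      rw [hcdef]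
      exact mul_le_mul_of_nonneg_left h2 hL0pos.le
    have h4 : L₀ * (1 / (6 * L₀)) = 1/6 := by
      field_simp
    linarith [h4 ▸ h3]
  -- differentiability of the gradient
  have hgraddiff : Differentiable ℝ (gradient u) := by
    have h1 : ContDiff ℝ 1 (fderiv ℝ u) := hu.fderiv_right (by norm_num)
    have h2 : Differentiable ℝ (fderiv ℝ u) := h1.differentiable one_ne_zero
    exact fun x => ((InnerProductSpace.toDual ℝ
      (EuclideanSpace ℝ (Fin d))).symm.differentiable.comp h2) x
  -- the main Lipschitz estimate, asymmetric version
  have main : ∀ θ θ' : EuclideanSpace ℝ (Fin d), ‖θ'‖ ≤ ‖θ‖ →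
      ‖lam • hlam lam eps θ - lam • hlam lam eps θ'‖ ≤ c * ‖θ - θ'‖ := by
    intro θ θ' hno
    set φ1 : ℝ := ((1 + lam * ‖θ‖ ^ (((l:ℝ)+1)/eps)) ^ eps)⁻¹ with hφ1
    set φ2 : ℝ := ((1 + lam * ‖θ'‖ ^ (((l:ℝ)+1)/eps)) ^ eps)⁻¹ with hφ2
    have hφ1nn : (0:ℝ) ≤ φ1 := by
      rw [hφ1]
      have := kt_base_one_le (r := ((l:ℝ)+1)/eps) hlp (norm_nonneg θ)
      positivity
    have hφ1le : φ1 ≤ 1 := by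
      rw [hφ1]; exact kt_inv_le_one hlp (norm_nonneg θ) he0.le
    have hA : lam ≤ lam ^ ((1:ℝ) - eps) := kt_lam_le_rpow hlp hlam1 he0 (by linarith)
    have decomp : lam • hlam lam eps θ - lam • hlam lam eps θ' =
        (lam * a) • (θ - θ') + (lam * φ1) • ((h θ - h θ') - a • (θ - θ'))
          + (lam * (φ1 - φ2)) • (h θ' - a • θ') := by
      rw [hlam_def, hlam_def, hφ1, hφ2]
      module
    -- mean value bound for h
    have hmvt : ‖h θ - h θ'‖ ≤ (K_H * (1 + ‖θ‖ ^ l)) * ‖θ - θ'‖ := by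
      rw [hgrad θ, hgrad θ']
      have hbound : ∀ x ∈ Metric.closedBall (0 : EuclideanSpace ℝ (Fin d)) ‖θ‖,
          ‖fderiv ℝ (gradient u) x‖ ≤ K_H * (1 + ‖θ‖ ^ l) := by
        intro x hx
        rw [← hHess x]
        have hxn : ‖x‖ ≤ ‖θ‖ := by
          simpa [Metric.mem_closedBall, dist_zero_right] using hx
        calc ‖H x‖ ≤ K_H * (1 + ‖x‖ ^ l) := hH_bd x
          _ ≤ K_H * (1 + ‖θ‖ ^ l) := by
            have := pow_le_pow_left₀ (norm_nonneg x) hxn l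
            nlinarith
      have hmem1 : θ' ∈ Metric.closedBall (0 : EuclideanSpace ℝ (Fin d)) ‖θ‖ := by
        simpa [Metric.mem_closedBall, dist_zero_right] using hno
      have hmem2 : θ ∈ Metric.closedBall (0 : EuclideanSpace ℝ (Fin d)) ‖θ‖ := by
        simp [Metric.mem_closedBall, dist_zero_right]
      exact Convex.norm_image_sub_le_of_norm_fderiv_le
        (fun x _ => hgraddiff x) hbound (convex_closedBall _ _) hmem1 hmem2
    -- scalar bound for the middle term
    have hB2 : lam * φ1 * ‖θ‖ ^ l ≤ lam ^ ((1:ℝ)-eps) := by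
      rw [hφ1]
      exact kt_keyA hl hlp hlam1 he0 he1 (norm_nonneg θ)
    have hb1 : lam * φ1 ≤ lam ^ ((1:ℝ)-eps) := by
      have : lam * φ1 ≤ lam := by nlinarith
      linarith
    have hBsc : lam * φ1 * (K_H * (1 + ‖θ‖ ^ l) + a) ≤ lam ^ ((1:ℝ)-eps) * (2*K_H + a) := by
      have e1 := mul_le_mul_of_nonneg_left hb1 hK_H.le
      have e2 := mul_le_mul_of_nonneg_left hB2 hK_H.le
      have e3 := mul_le_mul_of_nonneg_left hb1 ha.le
      nlinarith [e1, e2, e3]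
    -- the third term
    have hgbound : ‖h θ' - a • θ'‖ ≤ K_h * (1 + ‖θ'‖ ^ (l+1)) + a * ‖θ'‖ := by
      calc ‖h θ' - a • θ'‖ ≤ ‖h θ'‖ + ‖a • θ'‖ := norm_sub_le _ _
        _ ≤ K_h * (1 + ‖θ'‖ ^ (l+1)) + a * ‖θ'‖ := by
            have := hh_bd θ'
            rw [norm_smul, Real.norm_eq_abs, abs_of_pos ha]
            linarith
    have hC : lam * |φ1 - φ2| * (K_h * (1 + ‖θ'‖ ^ (l+1)) + a * ‖θ'‖)
        ≤ lam ^ ((1:ℝ)-eps) * (((l:ℝ)+1) * (2*K_h + a)) * (‖θ‖ - ‖θ'‖) := by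
      rw [hφ1, hφ2]
      exact kt_keyC hl hlp hlam1 he0 he1 ha hK_h (norm_nonneg θ') hno
    have hnsub : ‖θ‖ - ‖θ'‖ ≤ ‖θ - θ'‖ := norm_sub_norm_le θ θ'
    -- assemble
    have t1 : ‖(lam * a) • (θ - θ')‖ ≤ lam ^ ((1:ℝ)-eps) * a * ‖θ - θ'‖ := by
      rw [norm_smul, Real.norm_eq_abs, abs_of_pos (by positivity)]
      have h5 : lam * a ≤ lam ^ ((1:ℝ)-eps) * a := mul_le_mul_of_nonneg_right hA ha.le
      exact mul_le_mul_of_nonneg_right h5 (norm_nonneg _)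
    have t2 : ‖(lam * φ1) • ((h θ - h θ') - a • (θ - θ'))‖
        ≤ lam ^ ((1:ℝ)-eps) * (2*K_H + a) * ‖θ - θ'‖ := by
      rw [norm_smul, Real.norm_eq_abs, abs_of_nonneg (by positivity)]
      have h6 : ‖(h θ - h θ') - a • (θ - θ')‖ ≤ (K_H * (1 + ‖θ‖ ^ l) + a) * ‖θ - θ'‖ := by
        calc ‖(h θ - h θ') - a • (θ - θ')‖ ≤ ‖h θ - h θ'‖ + ‖a • (θ - θ')‖ := norm_sub_le _ _
          _ ≤ (K_H * (1 + ‖θ‖ ^ l)) * ‖θ - θ'‖ + a * ‖θ - θ'‖ := by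
              rw [norm_smul, Real.norm_eq_abs, abs_of_pos ha]
              linarith [hmvt]
          _ = (K_H * (1 + ‖θ‖ ^ l) + a) * ‖θ - θ'‖ := by ring
      calc lam * φ1 * ‖(h θ - h θ') - a • (θ - θ')‖
          ≤ lam * φ1 * ((K_H * (1 + ‖θ‖ ^ l) + a) * ‖θ - θ'‖) := by
            apply mul_le_mul_of_nonneg_left h6 (by positivity)
        _ = (lam * φ1 * (K_H * (1 + ‖θ‖ ^ l) + a)) * ‖θ - θ'‖ := by ring
        _ ≤ lam ^ ((1:ℝ)-eps) * (2*K_H + a) * ‖θ - θ'‖ :=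
            mul_le_mul_of_nonneg_right hBsc (norm_nonneg _)
    have t3 : ‖(lam * (φ1 - φ2)) • (h θ' - a • θ')‖
        ≤ lam ^ ((1:ℝ)-eps) * (((l:ℝ)+1) * (2*K_h + a)) * ‖θ - θ'‖ := by
      rw [norm_smul, Real.norm_eq_abs, abs_mul, abs_of_pos hlp]
      calc lam * |φ1 - φ2| * ‖h θ' - a • θ'‖
          ≤ lam * |φ1 - φ2| * (K_h * (1 + ‖θ'‖ ^ (l+1)) + a * ‖θ'‖) := by
            apply mul_le_mul_of_nonneg_left hgbound (by positivity)
        _ ≤ lam ^ ((1:ℝ)-eps) * (((l:ℝ)+1) * (2*K_h + a)) * (‖θ‖ - ‖θ'‖) := hC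
        _ ≤ lam ^ ((1:ℝ)-eps) * (((l:ℝ)+1) * (2*K_h + a)) * ‖θ - θ'‖ := by
            apply mul_le_mul_of_nonneg_left hnsub (by positivity)
    calc ‖lam • hlam lam eps θ - lam • hlam lam eps θ'‖
        = ‖(lam * a) • (θ - θ') + (lam * φ1) • ((h θ - h θ') - a • (θ - θ'))
            + (lam * (φ1 - φ2)) • (h θ' - a • θ')‖ := by rw [decomp]
      _ ≤ ‖(lam * a) • (θ - θ')‖ + ‖(lam * φ1) • ((h θ - h θ') - a • (θ - θ'))‖
            + ‖(lam * (φ1 - φ2)) • (h θ' - a • θ')‖ := norm_add₃_le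
      _ ≤ lam ^ ((1:ℝ)-eps) * a * ‖θ - θ'‖ + lam ^ ((1:ℝ)-eps) * (2*K_H + a) * ‖θ - θ'‖
            + lam ^ ((1:ℝ)-eps) * (((l:ℝ)+1) * (2*K_h + a)) * ‖θ - θ'‖ := by
          linarith [t1, t2, t3]
      _ ≤ c * ‖θ - θ'‖ := by
          rw [hcdef, hL0]
          have hn0 : (0:ℝ) ≤ ‖θ - θ'‖ := norm_nonneg _
          nlinarith [mul_nonneg (mul_nonneg hK_H.le hrp0) hn0]
  -- symmetric version
  have key : ∀ θ θ' : EuclideanSpace ℝ (Fin d),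
      ‖lam • hlam lam eps θ - lam • hlam lam eps θ'‖ ≤ c * ‖θ - θ'‖ := by
    intro θ θ'
    rcases le_total ‖θ'‖ ‖θ‖ with hle | hle
    · exact main θ θ' hle
    · rw [norm_sub_rev, norm_sub_rev θ θ']
      exact main θ' θ hle
  -- bi-Lipschitz bounds
  have hbl : ∀ θ θ' : EuclideanSpace ℝ (Fin d),
      (1 - c) * ‖θ - θ'‖ ≤
          ‖(θ - lam • hlam lam eps θ) - (θ' - lam • hlam lam eps θ')‖ ∧
        ‖(θ - lam • hlam lam eps θ) - (θ' - lam • hlam lam eps θ')‖ ≤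
          (1 + c) * ‖θ - θ'‖ := by
    intro θ θ'
    have hk := key θ θ'
    have hid : (θ - lam • hlam lam eps θ) - (θ' - lam • hlam lam eps θ') =
        (θ - θ') - (lam • hlam lam eps θ - lam • hlam lam eps θ') := by abel
    have e1 : θ - θ' = ((θ - lam • hlam lam eps θ) - (θ' - lam • hlam lam eps θ'))
        + (lam • hlam lam eps θ - lam • hlam lam eps θ') := by abel
    constructor
    · have h5 : ‖θ - θ'‖ ≤
          ‖(θ - lam • hlam lam eps θ) - (θ' - lam • hlam lam eps θ')‖ + c * ‖θ - θ'‖ := by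
        calc ‖θ - θ'‖ = ‖((θ - lam • hlam lam eps θ) - (θ' - lam • hlam lam eps θ'))
              + (lam • hlam lam eps θ - lam • hlam lam eps θ')‖ := by rw [← e1]
          _ ≤ ‖(θ - lam • hlam lam eps θ) - (θ' - lam • hlam lam eps θ')‖
              + ‖lam • hlam lam eps θ - lam • hlam lam eps θ'‖ := norm_add_le _ _
          _ ≤ ‖(θ - lam • hlam lam eps θ) - (θ' - lam • hlam lam eps θ')‖ + c * ‖θ - θ'‖ := by
              linarith
      linarith
    · calc ‖(θ - lam • hlam lam eps θ) - (θ' - lam • hlam lam eps θ')‖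
          = ‖(θ - θ') - (lam • hlam lam eps θ - lam • hlam lam eps θ')‖ := by rw [hid]
        _ ≤ ‖θ - θ'‖ + ‖lam • hlam lam eps θ - lam • hlam lam eps θ'‖ := norm_sub_le _ _
        _ ≤ ‖θ - θ'‖ + c * ‖θ - θ'‖ := by linarith
        _ = (1 + c) * ‖θ - θ'‖ := by ring
  refine ⟨hbl, ?_, ?_⟩
  · -- injective
    intro x y hxy
    simp only at hxy
    have hlow := (hbl x y).1
    rw [hxy, sub_self, norm_zero] at hlow
    have hn0 : (0:ℝ) ≤ ‖x - y‖ := norm_nonneg _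
    have : ‖x - y‖ = 0 := by nlinarith
    exact sub_eq_zero.mp (norm_eq_zero.mp this)
  · -- surjective
    intro y
    set T : EuclideanSpace ℝ (Fin d) → EuclideanSpace ℝ (Fin d) :=
      fun θ => y + lam • hlam lam eps θ with hT
    have hlip : LipschitzWith ⟨c, hc0⟩ T := by
      apply LipschitzWith.of_dist_le_mul
      intro x z
      rw [dist_eq_norm, dist_eq_norm]
      have h7 : T x - T z = lam • hlam lam eps x - lam • hlam lam eps z := by
        simp only [hT]; abel
      rw [h7]
      exact key x z
    have hcontr : ContractingWith ⟨c, hc0⟩ T := by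
      constructor
      · apply NNReal.coe_lt_coe.mp
        push_cast
        change c < 1
        linarith
      · exact hlip
    refine ⟨ContractingWith.fixedPoint T hcontr, ?_⟩
    have hfix : y + lam • hlam lam eps (ContractingWith.fixedPoint T hcontr) =
        ContractingWith.fixedPoint T hcontr := hcontr.fixedPoint_isFixedPt
    show ContractingWith.fixedPoint T hcontr
        - lam • hlam lam eps (ContractingWith.fixedPoint T hcontr) = y
    have h8 : ContractingWith.fixedPoint T hcontr
          - lam • hlam lam eps (ContractingWith.fixedPoint T hcontr)
        = (y + lam • hlam lam eps (ContractingWith.fixedPoint T hcontr))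
          - lam • hlam lam eps (ContractingWith.fixedPoint T hcontr) := by
      rw [hfix]
    rw [h8, add_sub_cancel_right]
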